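/- For every integer n ≥ 1, the sum ∑_{l=1}^{n} 1/((n−l+1)·ln(l+2)) is strictly less than 4. -/

import Mathlib

open Finset

lemma harmonic_le_one_add_log' (M : ℕ) :
    ∑ k ∈ Finset.Icc 1 M, (1 : ℝ) / k ≤ 1 + Real.log M := by
  induction M with
  | zero => simp
  | succ M ih =>
    rcases Nat.eq_zero_or_pos M with h | h
    · subst h; simp
    rw [Finset.sum_Icc_succ_top (by omega)]
    have hM : (1 : ℝ) ≤ (M : ℝ) := by exact_mod_cast h
    have hkey : Real.log M + 1 / (M + 1) ≤ Real.log (M + 1) := by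
      have hx : (0 : ℝ) < (M : ℝ) / (M + 1) := by positivity
      have := Real.log_le_sub_one_of_pos hx
      rw [Real.log_div (by linarith) (by linarith)] at this
      have h1 : (M : ℝ) / (M + 1) - 1 = -(1 / (M + 1)) := by field_simp; ring
      linarith [this, h1.le]
    push_cast
    linarith

theorem sum_one_div_mul_log_lt_four (n : ℕ) (hn : 1 ≤ n) :
    ∑ l ∈ Finset.Icc 1 n, 1 / (((n - l + 1 : ℕ) : ℝ) * Real.log ((l : ℝ) + 2)) < 4 := by
  set f : ℕ → ℝ := fun l => 1 / (((n - l + 1 : ℕ) : ℝ) * Real.log ((l : ℝ) + 2)) with hf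
  set m := n / 2 with hm
  have hlog3 : (1 : ℝ) < Real.log 3 := by
    rw [Real.lt_log_iff_exp_lt (by norm_num)]
    calc Real.exp 1 < 2.7182818286 := Real.exp_one_lt_d9
      _ < 3 := by norm_num
  have hsplit : ∑ l ∈ Finset.Icc 1 n, f l
      = (∑ l ∈ Finset.Ioc 0 m, f l) + ∑ l ∈ Finset.Ioc m n, f l := by
    rw [Finset.sum_Ioc_consecutive f (Nat.zero_le m) (Nat.div_le_self n 2),
      ← Finset.Icc_add_one_left_eq_Ioc, zero_add]
  -- bound on first part
  have hS1 : ∑ l ∈ Finset.Ioc 0 m, f l ≤ 1 / Real.log 3 := by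
    have hb : ∀ l ∈ Finset.Ioc 0 m, f l ≤ 1 / (((n - m + 1 : ℕ) : ℝ) * Real.log 3) := by
      intro l hl
      simp only [Finset.mem_Ioc] at hl
      have h1 : ((n - m + 1 : ℕ) : ℝ) ≤ ((n - l + 1 : ℕ) : ℝ) := by
        have : n - m + 1 ≤ n - l + 1 := by omega
        exact_mod_cast this
      have h2 : Real.log 3 ≤ Real.log ((l : ℝ) + 2) := by
        apply Real.log_le_log (by norm_num)
        have : (1 : ℝ) ≤ (l : ℝ) := by exact_mod_cast hl.1
        linarith
      apply one_div_le_one_div_of_le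
      · positivity
      · have hpos : (0 : ℝ) < ((n - m + 1 : ℕ) : ℝ) := by positivity
        calc ((n - m + 1 : ℕ) : ℝ) * Real.log 3
            ≤ ((n - l + 1 : ℕ) : ℝ) * Real.log 3 := by nlinarith
          _ ≤ ((n - l + 1 : ℕ) : ℝ) * Real.log ((l : ℝ) + 2) := by
              have : (0 : ℝ) < ((n - l + 1 : ℕ) : ℝ) := by positivity
              nlinarith
    calc ∑ l ∈ Finset.Ioc 0 m, f l
        ≤ (Finset.Ioc 0 m).card • (1 / (((n - m + 1 : ℕ) : ℝ) * Real.log 3)) :=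
          Finset.sum_le_card_nsmul _ _ _ hb
      _ = (m : ℝ) * (1 / (((n - m + 1 : ℕ) : ℝ) * Real.log 3)) := by
          rw [Nat.card_Ioc, nsmul_eq_mul]; norm_num
      _ ≤ 1 / Real.log 3 := by
          rw [mul_one_div, div_le_div_iff₀ (by positivity) (by linarith)]
          have hmn : (m : ℝ) ≤ ((n - m + 1 : ℕ) : ℝ) := by
            have : m ≤ n - m + 1 := by omega
            exact_mod_cast this
          nlinarith
  -- bound on second part
  have hD : (1 : ℝ) < Real.log ((m : ℝ) + 3) := by
    calc (1:ℝ) < Real.log 3 := hlog3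
      _ ≤ Real.log ((m : ℝ) + 3) := by
          apply Real.log_le_log (by norm_num)
          have : (0:ℝ) ≤ (m:ℝ) := by positivity
          linarith
  have hS2 : ∑ l ∈ Finset.Ioc m n, f l
      ≤ (1 / Real.log ((m : ℝ) + 3)) * (1 + Real.log ((n - m : ℕ) : ℝ)) := by
    have step1 : ∑ l ∈ Finset.Ioc m n, f l
        ≤ ∑ l ∈ Finset.Ioc m n, (1 / Real.log ((m : ℝ) + 3)) * (1 / ((n - l + 1 : ℕ) : ℝ)) := by
      apply Finset.sum_le_sum
      intro l hl
      simp only [Finset.mem_Ioc] at hl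
      have h2 : Real.log ((m : ℝ) + 3) ≤ Real.log ((l : ℝ) + 2) := by
        apply Real.log_le_log (by positivity)
        have : (m : ℝ) + 1 ≤ (l : ℝ) := by exact_mod_cast hl.1
        linarith
      have hpos : (0 : ℝ) < ((n - l + 1 : ℕ) : ℝ) := by positivity
      rw [one_div_mul_eq_div, div_div]
      apply one_div_le_one_div_of_le
      · nlinarith
      · nlinarith
    have step2 : ∑ l ∈ Finset.Ioc m n, (1 / ((n - l + 1 : ℕ) : ℝ))
        = ∑ k ∈ Finset.Icc 1 (n - m), (1 : ℝ) / k := by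
      apply Finset.sum_nbij' (fun l => n - l + 1) (fun k => n - k + 1)
      · intro l hl; simp only [Finset.mem_Ioc] at hl; simp only [Finset.mem_Icc]; omega
      · intro k hk; simp only [Finset.mem_Icc] at hk; simp only [Finset.mem_Ioc]; omega
      · intro l hl; simp only [Finset.mem_Ioc] at hl; omega
      · intro k hk; simp only [Finset.mem_Icc] at hk; omega
      · intro l hl; rfl
    calc ∑ l ∈ Finset.Ioc m n, f l
        ≤ ∑ l ∈ Finset.Ioc m n, (1 / Real.log ((m : ℝ) + 3)) * (1 / ((n - l + 1 : ℕ) : ℝ)) :=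
          step1
      _ = (1 / Real.log ((m : ℝ) + 3)) * ∑ k ∈ Finset.Icc 1 (n - m), (1 : ℝ) / k := by
          rw [← Finset.mul_sum, step2]
      _ ≤ (1 / Real.log ((m : ℝ) + 3)) * (1 + Real.log ((n - m : ℕ) : ℝ)) := by
          apply mul_le_mul_of_nonneg_left (harmonic_le_one_add_log' (n - m))
          positivity
  -- combine
  have hnm1 : 1 ≤ n - m := by omega
  have hL0 : 0 ≤ Real.log ((n - m : ℕ) : ℝ) := by
    apply Real.log_nonneg
    exact_mod_cast hnm1
  have hlog_nm : Real.log ((n - m : ℕ) : ℝ) ≤ Real.log ((m : ℝ) + 3) := by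
    apply Real.log_le_log (by exact_mod_cast hnm1)
    have : n - m ≤ m + 3 := by omega
    calc ((n - m : ℕ) : ℝ) ≤ ((m + 3 : ℕ) : ℝ) := by exact_mod_cast this
      _ = (m : ℝ) + 3 := by push_cast; ring
  have hD0 : (0 : ℝ) < Real.log ((m : ℝ) + 3) := by linarith
  have h1 : 1 / Real.log 3 < 1 := by rw [div_lt_one (by linarith)]; linarith
  have h2 : (1 / Real.log ((m : ℝ) + 3)) * (1 + Real.log ((n - m : ℕ) : ℝ)) < 2 := by
    rw [one_div_mul_eq_div, div_lt_iff₀ hD0]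
    nlinarith
  rw [hsplit]
  linarith
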